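/- Let A(z, k) = ∑_x sup_P P(x | z) be the conditional Shtarkov sum of the SBM with k communities given assignment z ∈ [k]^n (sum over all graphs x on n vertices, sup over symmetric P ∈ [0,1]^{k×k}). Then for all n ≥ 2, all k ≥ 1, and all z ∈ [k]^n: 0 ≤ log A(z, k) ≤ (k(k+1)/2) log n + c_k, where c_k depends only on k. -/

import Mathlib

open Finset Real

/-- maximum likelihood value `(o/m)^o ((m-o)/m)^(m-o)`. -/
noncomputable def SBMg (m o : ℕ) : ℝ := ((o : ℝ)/m)^o * (((m - o : ℕ) : ℝ)/m)^(m - o)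

lemma SBMg_nonneg (m o : ℕ) : 0 ≤ SBMg m o := by
  unfold SBMg; positivity

lemma SBMg_zero (m : ℕ) : SBMg m 0 = 1 := by
  rcases Nat.eq_zero_or_pos m with h | h
  · subst h; simp [SBMg]
  · have : (m : ℝ) ≠ 0 := Nat.cast_ne_zero.2 h.ne'
    simp [SBMg, div_self this]

lemma SBMg_self (m : ℕ) : SBMg m m = 1 := by
  rcases Nat.eq_zero_or_pos m with h | h
  · subst h; simp [SBMg]
  · have : (m : ℝ) ≠ 0 := Nat.cast_ne_zero.2 h.ne'
    simp [SBMg, div_self this]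

lemma pow_mul_pow_le_SBMg (m o : ℕ) (ho : o ≤ m) {p : ℝ} (h0 : 0 ≤ p) (h1 : p ≤ 1) :
    p ^ o * (1 - p) ^ (m - o) ≤ SBMg m o := by
  rcases Nat.eq_zero_or_pos o with rfl | hopos
  · rw [SBMg_zero]
    calc p ^ 0 * (1-p)^(m-0) = (1-p)^(m-0) := by ring
    _ ≤ 1 := pow_le_one₀ (by linarith) (by linarith)
  rcases eq_or_lt_of_le ho with rfl | holt
  · rw [SBMg_self]
    simp only [Nat.sub_self, pow_zero, mul_one]
    exact pow_le_one₀ h0 h1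
  -- now 0 < o < m
  rcases eq_or_lt_of_le h0 with rfl | hp0
  · rw [zero_pow hopos.ne']
    simpa using SBMg_nonneg m o
  rcases eq_or_lt_of_le h1 with rfl | hp1
  · rw [show (1:ℝ) - 1 = 0 by ring, zero_pow (Nat.sub_ne_zero_of_lt holt)]
    simpa using SBMg_nonneg m o
  -- 0 < p < 1, 0 < o < m
  have hmpos : 0 < m := hopos.trans_le ho
  have hm : (0:ℝ) < m := by exact_mod_cast hmpos
  have hoR : (0:ℝ) < o := by exact_mod_cast hopos
  have hmoR : (0:ℝ) < ((m - o : ℕ) : ℝ) := by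
    exact_mod_cast Nat.sub_pos_of_lt holt
  have hcast : ((m - o : ℕ) : ℝ) = (m : ℝ) - o := by
    exact Nat.cast_sub ho
  set w1 : ℝ := (o : ℝ) / m with hw1
  set w2 : ℝ := ((m - o : ℕ) : ℝ) / m with hw2
  set z1 : ℝ := p * m / o with hz1
  set z2 : ℝ := (1 - p) * m / ((m - o : ℕ) : ℝ) with hz2
  have hz1pos : 0 < z1 := by positivity
  have hz2pos : 0 < z2 := by
    have : (0:ℝ) < 1 - p := by linarith
    positivity
  have hmo' : ((m:ℝ) - o) ≠ 0 := by rw [← hcast]; exact hmoR.ne'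
  have hsum : w1 + w2 = 1 := by
    rw [hw1, hw2, hcast, ← add_div]
    field_simp
    ring
  have hamgm : z1 ^ w1 * z2 ^ w2 ≤ 1 := by
    have h := Real.geom_mean_le_arith_mean2_weighted
      (by positivity : (0:ℝ) ≤ w1) (by positivity : (0:ℝ) ≤ w2)
      hz1pos.le hz2pos.le hsum
    have : w1 * z1 + w2 * z2 = 1 := by
      rw [hw1, hw2, hz1, hz2, hcast]
      field_simp
      ring
    linarith [h, this.le]
  have hpow : z1 ^ o * z2 ^ (m - o) ≤ 1 := by
    have h2 : (z1 ^ w1 * z2 ^ w2) ^ (m : ℕ) ≤ 1 ^ (m : ℕ) :=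
      pow_le_pow_left₀ (by positivity) hamgm m
    rw [one_pow] at h2
    calc z1 ^ o * z2 ^ (m - o)
        = (z1 ^ w1 * z2 ^ w2) ^ (m : ℕ) := by
          rw [mul_pow, ← Real.rpow_natCast (z1 ^ w1) m, ← Real.rpow_natCast (z2 ^ w2) m,
            ← Real.rpow_mul hz1pos.le, ← Real.rpow_mul hz2pos.le]
          have e1 : w1 * (m:ℝ) = (o : ℝ) := by rw [hw1]; field_simp
          have e2 : w2 * (m:ℝ) = ((m - o : ℕ) : ℝ) := by rw [hw2]; field_simp
          rw [e1, e2, Real.rpow_natCast, Real.rpow_natCast]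
      _ ≤ 1 := h2
  have hfac : p ^ o * (1 - p) ^ (m - o) = (z1 ^ o * z2 ^ (m - o)) * SBMg m o := by
    have hp' : p = z1 * w1 := by rw [hz1, hw1]; field_simp
    have hq' : 1 - p = z2 * w2 := by
      rw [hz2, hw2, hcast]; field_simp
    rw [SBMg]
    calc p ^ o * (1 - p) ^ (m - o) = (z1 * w1) ^ o * (z2 * w2) ^ (m - o) := by
          rw [← hp', ← hq']
      _ = (z1 ^ o * z2 ^ (m-o)) * (w1 ^ o * w2 ^ (m-o)) := by rw [mul_pow, mul_pow]; ring
  rw [hfac]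
  exact mul_le_of_le_one_left (SBMg_nonneg m o) hpow

lemma stirling_bounds : ∃ a : ℝ, 0 < a ∧ ∀ n : ℕ, 1 ≤ n →
    a * (Real.sqrt n * ((n : ℝ) / Real.exp 1) ^ n) ≤ (n.factorial : ℝ) ∧
    (n.factorial : ℝ) ≤ Real.exp 1 * (Real.sqrt n * ((n : ℝ) / Real.exp 1) ^ n) := by
  obtain ⟨a, ha, hab⟩ := Stirling.stirlingSeq'_bounded_by_pos_constant
  refine ⟨a, ha, fun n hn => ?_⟩
  obtain ⟨n, rfl⟩ := Nat.exists_eq_add_of_le hn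
  set N := 1 + n with hN
  have hNpos : 0 < N := by omega
  have hd : (0:ℝ) < Real.sqrt (2 * N) * ((N : ℝ) / Real.exp 1) ^ N := by
    have : (0:ℝ) < N := by exact_mod_cast hNpos
    positivity
  have hseq : Stirling.stirlingSeq N = (N.factorial : ℝ) / (Real.sqrt (2 * N) * ((N : ℝ) / Real.exp 1) ^ N) := rfl
  have hfact : (N.factorial : ℝ) = Stirling.stirlingSeq N * (Real.sqrt (2 * N) * ((N : ℝ) / Real.exp 1) ^ N) := by
    rw [hseq, div_mul_cancel₀]
    exact hd.ne'
  have hlow : a ≤ Stirling.stirlingSeq N := by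
    have := hab n
    simpa [hN, Nat.add_comm] using this
  have hup : Stirling.stirlingSeq N ≤ Real.exp 1 / Real.sqrt 2 := by
    have h1 : Stirling.stirlingSeq N ≤ Stirling.stirlingSeq 1 := by
      have := Stirling.stirlingSeq'_antitone (Nat.zero_le n)
      simpa [Function.comp, hN, Nat.add_comm] using this
    rwa [Stirling.stirlingSeq_one] at h1
  have hsqrt : Real.sqrt (2 * N) = Real.sqrt 2 * Real.sqrt N := by
    rw [← Real.sqrt_mul (by norm_num)]
  constructor
  · rw [hfact]
    have h2 : (1:ℝ) ≤ Real.sqrt 2 := by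
      rw [show (1:ℝ) = Real.sqrt 1 by simp]
      exact Real.sqrt_le_sqrt (by norm_num)
    have : Real.sqrt N * ((N : ℝ) / Real.exp 1) ^ N ≤ Real.sqrt (2*N) * ((N : ℝ) / Real.exp 1) ^ N := by
      apply mul_le_mul_of_nonneg_right _ (by positivity)
      rw [hsqrt]
      nlinarith [Real.sqrt_nonneg (N:ℝ)]
    calc a * (Real.sqrt N * ((N : ℝ) / Real.exp 1) ^ N)
        ≤ a * (Real.sqrt (2*N) * ((N : ℝ) / Real.exp 1) ^ N) := by
          exact mul_le_mul_of_nonneg_left this ha.le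
      _ ≤ Stirling.stirlingSeq N * (Real.sqrt (2*N) * ((N : ℝ) / Real.exp 1) ^ N) :=
          mul_le_mul_of_nonneg_right hlow hd.le
  · rw [hfact, hsqrt]
    have hs2 : (0:ℝ) < Real.sqrt 2 := by positivity
    calc Stirling.stirlingSeq N * (Real.sqrt 2 * Real.sqrt N * ((N : ℝ) / Real.exp 1) ^ N)
        ≤ (Real.exp 1 / Real.sqrt 2) * (Real.sqrt 2 * Real.sqrt N * ((N : ℝ) / Real.exp 1) ^ N) := by
          apply mul_le_mul_of_nonneg_right hup
          positivity
      _ = Real.exp 1 * (Real.sqrt N * ((N : ℝ) / Real.exp 1) ^ N) := by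
          field_simp
open Finset Real


lemma choose_SBMg_le (a : ℝ) (ha : 0 < a)
    (hst : ∀ n : ℕ, 1 ≤ n →
      a * (Real.sqrt n * ((n : ℝ) / Real.exp 1) ^ n) ≤ (n.factorial : ℝ) ∧
      (n.factorial : ℝ) ≤ Real.exp 1 * (Real.sqrt n * ((n : ℝ) / Real.exp 1) ^ n))
    (m o : ℕ) (h1 : 1 ≤ o) (h2 : o < m) :
    (m.choose o : ℝ) * SBMg m o ≤
      (Real.exp 1 / a ^ 2) * (Real.sqrt m / (Real.sqrt o * Real.sqrt ((m - o : ℕ)))) := by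
  obtain ⟨d, rfl⟩ : ∃ d, m = o + d := ⟨m - o, by omega⟩
  have hd : 1 ≤ d := by omega
  have hsub : o + d - o = d := by omega
  set e := Real.exp 1 with he
  have hepos : 0 < e := Real.exp_pos 1
  have hoR : (0:ℝ) < o := by exact_mod_cast h1
  have hdR : (0:ℝ) < d := by exact_mod_cast hd
  have hmR : (0:ℝ) < (o + d : ℕ) := by positivity
  set A : ℝ := Real.sqrt (o+d : ℕ) * (((o+d : ℕ) : ℝ) / e) ^ (o+d) with hA
  set B : ℝ := Real.sqrt o * ((o : ℝ) / e) ^ o with hB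
  set C : ℝ := Real.sqrt d * ((d : ℝ) / e) ^ d with hC
  have hApos : 0 < A := by rw [hA]; positivity
  have hBpos : 0 < B := by rw [hB]; positivity
  have hCpos : 0 < C := by rw [hC]; positivity
  have hmfac : ((o+d).factorial : ℝ) ≤ e * A := (hst (o+d) (by omega)).2
  have hofac : a * B ≤ (o.factorial : ℝ) := (hst o h1).1
  have hdfac : a * C ≤ (d.factorial : ℝ) := (hst d hd).1
  have hchoose : ((o+d).choose o : ℝ) = ((o+d).factorial : ℝ) / ((o.factorial : ℝ) * ((d).factorial : ℝ)) := by
    rw [Nat.cast_choose ℝ (Nat.le_add_right o d), hsub]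
  have hbound : ((o+d).choose o : ℝ) ≤ (e * A) / ((a * B) * (a * C)) := by
    rw [hchoose]
    apply div_le_div₀ (by positivity) hmfac (by positivity)
    exact mul_le_mul hofac hdfac (by positivity) (by positivity)
  have hkey : (e * A) / ((a * B) * (a * C)) * SBMg (o+d) o =
      (e / a ^ 2) * (Real.sqrt (o+d : ℕ) / (Real.sqrt o * Real.sqrt d)) := by
    rw [SBMg, hsub, hA, hB, hC]
    have hcast : ((o + d : ℕ) : ℝ) = (o : ℝ) + d := by push_cast; ring
    rw [hcast]
    have hso : Real.sqrt o ≠ 0 := by positivity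
    have hsd : Real.sqrt d ≠ 0 := by positivity
    have hsm : Real.sqrt ((o:ℝ) + d) ≠ 0 := by positivity
    simp only [div_pow, pow_add]
    field_simp
  calc ((o+d).choose o : ℝ) * SBMg (o+d) o
      ≤ (e * A) / ((a * B) * (a * C)) * SBMg (o+d) o := by
        apply mul_le_mul_of_nonneg_right hbound
        unfold SBMg; positivity
    _ = (e / a ^ 2) * (Real.sqrt (o+d : ℕ) / (Real.sqrt o * Real.sqrt d)) := hkey
    _ = (e / a ^ 2) * (Real.sqrt (o+d : ℕ) / (Real.sqrt o * Real.sqrt ((o + d - o : ℕ)))) := by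
        rw [hsub]
open Finset Real

lemma sum_one_div_sqrt_le (N : ℕ) :
    ∑ o ∈ Finset.range N, 1 / Real.sqrt (o + 1) ≤ 2 * Real.sqrt N := by
  induction N with
  | zero => simp
  | succ N ih =>
    rw [Finset.sum_range_succ]
    have hstep : 1 / Real.sqrt ((N:ℝ) + 1) ≤ 2 * Real.sqrt ((N:ℝ) + 1) - 2 * Real.sqrt N := by
      have hs1 : (0:ℝ) < Real.sqrt ((N:ℝ) + 1) := by positivity
      rw [div_le_iff₀ hs1]
      have hmul : Real.sqrt N * Real.sqrt ((N:ℝ)+1) ≤ ((N:ℝ) + (N+1))/2 := by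
        nlinarith [Real.sq_sqrt (by positivity : (0:ℝ) ≤ (N:ℝ)),
          Real.sq_sqrt (by positivity : (0:ℝ) ≤ (N:ℝ)+1),
          Real.sqrt_nonneg ((N:ℝ)), Real.sqrt_nonneg ((N:ℝ)+1),
          sq_nonneg (Real.sqrt N - Real.sqrt ((N:ℝ)+1))]
      nlinarith [Real.sq_sqrt (by positivity : (0:ℝ) ≤ (N:ℝ)+1)]
    have hcast : ((N+1 : ℕ) : ℝ) = (N:ℝ) + 1 := by push_cast; ring
    calc ∑ o ∈ Finset.range N, 1 / Real.sqrt (o + 1) + 1 / Real.sqrt (N + 1)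
        ≤ 2 * Real.sqrt N + (2 * Real.sqrt ((N:ℝ)+1) - 2 * Real.sqrt N) := add_le_add ih hstep
      _ = 2 * Real.sqrt ((N+1:ℕ)) := by rw [hcast]; ring

lemma sum_shift_le (m : ℕ) : ∑ j ∈ Finset.range (m-1), 1 / Real.sqrt ((j:ℝ)+1) ≤ 2 * Real.sqrt m := by
  calc ∑ j ∈ Finset.range (m-1), 1 / Real.sqrt ((j:ℝ)+1) ≤ 2 * Real.sqrt (m-1 : ℕ) :=
        sum_one_div_sqrt_le (m-1)
    _ ≤ 2 * Real.sqrt m := by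
        gcongr
        exact_mod_cast Nat.sub_le m 1

lemma sum_inv_sqrt_mul_le (m : ℕ) (hm : 1 ≤ m) :
    ∑ o ∈ Finset.Ico 1 m, 1 / (Real.sqrt o * Real.sqrt ((m - o : ℕ))) ≤ 4 := by
  have hsm : (0:ℝ) < Real.sqrt m := by
    have : (0:ℝ) < m := by exact_mod_cast hm
    positivity
  have hterm : ∀ o ∈ Finset.Ico 1 m,
      1 / (Real.sqrt o * Real.sqrt ((m - o : ℕ))) ≤
        (1 / Real.sqrt o + 1 / Real.sqrt ((m - o : ℕ))) / Real.sqrt m := by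
    intro o ho
    rw [Finset.mem_Ico] at ho
    have ho1 : (0:ℝ) < Real.sqrt o := by
      have : (0:ℝ) < o := by exact_mod_cast ho.1
      positivity
    have ho2 : (0:ℝ) < Real.sqrt ((m - o : ℕ)) := by
      have : (0:ℝ) < ((m - o : ℕ) : ℝ) := by
        have h3 : 0 < m - o := by omega
        exact_mod_cast h3
      positivity
    have hsum : Real.sqrt m ≤ Real.sqrt o + Real.sqrt ((m - o : ℕ)) := by
      have hcast : (m : ℝ) = (o : ℝ) + ((m - o : ℕ) : ℝ) := by
        have h4 : ((m - o : ℕ) : ℝ) = (m:ℝ) - o := by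
          exact_mod_cast Nat.cast_sub ho.2.le
        linarith
      nlinarith [Real.sq_sqrt (by positivity : (0:ℝ) ≤ (o:ℝ)),
        Real.sq_sqrt (by positivity : (0:ℝ) ≤ ((m - o : ℕ):ℝ)),
        Real.sq_sqrt (by positivity : (0:ℝ) ≤ (m:ℝ)),
        Real.sqrt_nonneg ((o:ℝ)), Real.sqrt_nonneg (((m-o:ℕ)):ℝ), Real.sqrt_nonneg ((m:ℝ)),
        mul_pos ho1 ho2]
    rw [div_le_div_iff₀ (by positivity) hsm]
    calc 1 * Real.sqrt m ≤ Real.sqrt o + Real.sqrt ((m - o : ℕ)) := by rw [one_mul]; exact hsum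
      _ = (1 / Real.sqrt o + 1 / Real.sqrt ((m - o : ℕ))) * (Real.sqrt o * Real.sqrt ((m - o:ℕ))) := by
          field_simp
          ring
  have h_sum1 : ∑ o ∈ Finset.Ico 1 m, 1 / Real.sqrt (o:ℝ) ≤ 2 * Real.sqrt m := by
    rw [Finset.sum_Ico_eq_sum_range]
    calc ∑ j ∈ Finset.range (m-1), 1 / Real.sqrt ((1+j : ℕ):ℝ)
        = ∑ j ∈ Finset.range (m-1), 1 / Real.sqrt ((j:ℝ)+1) := by
          apply Finset.sum_congr rfl
          intro j _
          congr 1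
          push_cast
          ring
      _ ≤ 2 * Real.sqrt m := sum_shift_le m
  have h_sum2 : ∑ o ∈ Finset.Ico 1 m, 1 / Real.sqrt (((m - o : ℕ)):ℝ) ≤ 2 * Real.sqrt m := by
    rw [Finset.sum_Ico_eq_sum_range]
    have e1 : ∑ j ∈ Finset.range (m-1), 1 / Real.sqrt (((m - (1+j) : ℕ)):ℝ)
        = ∑ j ∈ Finset.range (m-1), (fun i : ℕ => 1 / Real.sqrt (((i+1 : ℕ)):ℝ)) ((m-1) - 1 - j) := by
      apply Finset.sum_congr rfl
      intro j hj
      rw [Finset.mem_range] at hj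
      have h : m - (1+j) = m - 1 - 1 - j + 1 := by omega
      simp only [h]
    rw [e1, Finset.sum_range_reflect (fun i : ℕ => 1 / Real.sqrt (((i+1 : ℕ)):ℝ)) (m-1)]
    calc ∑ j ∈ Finset.range (m-1), 1 / Real.sqrt (((j+1 : ℕ)):ℝ)
        = ∑ j ∈ Finset.range (m-1), 1 / Real.sqrt ((j:ℝ)+1) := by
          apply Finset.sum_congr rfl
          intro j _
          congr 1
          push_cast
          ring
      _ ≤ 2 * Real.sqrt m := sum_shift_le m
  calc ∑ o ∈ Finset.Ico 1 m, 1 / (Real.sqrt o * Real.sqrt ((m - o : ℕ)))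
      ≤ ∑ o ∈ Finset.Ico 1 m, (1 / Real.sqrt o + 1 / Real.sqrt ((m - o : ℕ))) / Real.sqrt m :=
        Finset.sum_le_sum hterm
    _ = (∑ o ∈ Finset.Ico 1 m, 1 / Real.sqrt (o:ℝ) + ∑ o ∈ Finset.Ico 1 m, 1 / Real.sqrt ((m - o:ℕ))) / Real.sqrt m := by
        rw [← Finset.sum_add_distrib, Finset.sum_div]
    _ ≤ (2 * Real.sqrt m + 2 * Real.sqrt m) / Real.sqrt m := by
        gcongr
    _ ≤ 4 := by
        rw [div_le_iff₀ hsm]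
        linarith

lemma binom_shtarkov_le (a : ℝ) (ha : 0 < a)
    (hst : ∀ n : ℕ, 1 ≤ n →
      a * (Real.sqrt n * ((n : ℝ) / Real.exp 1) ^ n) ≤ (n.factorial : ℝ) ∧
      (n.factorial : ℝ) ≤ Real.exp 1 * (Real.sqrt n * ((n : ℝ) / Real.exp 1) ^ n))
    (m : ℕ) :
    ∑ o ∈ Finset.range (m+1), (m.choose o : ℝ) * SBMg m o ≤
      2 + (4 * Real.exp 1 / a ^ 2) * Real.sqrt m := by
  rcases Nat.eq_zero_or_pos m with rfl | hm
  · have h1 : Real.sqrt 0 = 0 := Real.sqrt_zero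
    simp [SBMg_zero]
  have hsplit : ∑ o ∈ Finset.range (m+1), (m.choose o : ℝ) * SBMg m o
      = 1 + (∑ o ∈ Finset.Ico 1 m, (m.choose o : ℝ) * SBMg m o) + 1 := by
    rw [Finset.sum_range_succ, Finset.range_eq_Ico, Finset.sum_eq_sum_Ico_succ_bot hm]
    rw [Nat.choose_zero_right, Nat.choose_self, SBMg_zero, SBMg_self]
    push_cast
    ring
  rw [hsplit]
  have hmid : ∑ o ∈ Finset.Ico 1 m, (m.choose o : ℝ) * SBMg m o ≤
      (4 * Real.exp 1 / a ^ 2) * Real.sqrt m := by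
    calc ∑ o ∈ Finset.Ico 1 m, (m.choose o : ℝ) * SBMg m o
        ≤ ∑ o ∈ Finset.Ico 1 m,
            (Real.exp 1 / a ^ 2) * Real.sqrt m * (1 / (Real.sqrt o * Real.sqrt ((m - o : ℕ)))) := by
          apply Finset.sum_le_sum
          intro o ho
          rw [Finset.mem_Ico] at ho
          have := choose_SBMg_le a ha hst m o ho.1 ho.2
          calc (m.choose o : ℝ) * SBMg m o
              ≤ (Real.exp 1 / a ^ 2) * (Real.sqrt m / (Real.sqrt o * Real.sqrt ((m - o : ℕ)))) := this
            _ = (Real.exp 1 / a ^ 2) * Real.sqrt m * (1 / (Real.sqrt o * Real.sqrt ((m - o : ℕ)))) := by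
                ring
      _ = (Real.exp 1 / a ^ 2) * Real.sqrt m *
            ∑ o ∈ Finset.Ico 1 m, 1 / (Real.sqrt o * Real.sqrt ((m - o : ℕ))) := by
          rw [Finset.mul_sum]
      _ ≤ (Real.exp 1 / a ^ 2) * Real.sqrt m * 4 := by
          apply mul_le_mul_of_nonneg_left (sum_inv_sqrt_mul_le m hm) (by positivity)
      _ = (4 * Real.exp 1 / a ^ 2) * Real.sqrt m := by ring
  linarith

lemma sum_powerset_card {ι : Type*} [DecidableEq ι] (u : Finset ι) (f : ℕ → ℝ) :
    ∑ s ∈ u.powerset, f s.card = ∑ o ∈ Finset.range (u.card+1), (u.card.choose o : ℝ) * f o := by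
  rw [Finset.sum_powerset]
  apply Finset.sum_congr rfl
  intro j _
  rw [Finset.sum_congr rfl (fun s hs => by rw [(Finset.mem_powersetCard.1 hs).2] :
      ∀ s ∈ Finset.powersetCard j u, f s.card = f j)]
  rw [Finset.sum_const, Finset.card_powersetCard, nsmul_eq_mul]

lemma sum_prod_fiber {ι κ : Type*} [Fintype ι] [DecidableEq ι] [DecidableEq κ]
    (F : Finset κ) (c : ι → κ) (hc : ∀ i, c i ∈ F) (f : κ → ℕ → ℝ) :
    ∑ x : ι → Bool, ∏ b ∈ F, f b ((Finset.univ.filter (fun i => c i = b ∧ x i = true)).card)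
      = ∏ b ∈ F, ∑ s ∈ (Finset.univ.filter (fun i : ι => c i = b)).powerset, f b s.card := by
  rw [Finset.prod_sum]
  refine Finset.sum_bij'
    (fun (x : ι → Bool) _ => fun b _ =>
      (Finset.univ.filter (fun i : ι => c i = b)).filter (fun i => x i = true))
    (fun p _ => fun i => decide (i ∈ p (c i) (hc i)))
    ?_ ?_ ?_ ?_ ?_
  · intro x _
    rw [Finset.mem_pi]
    intro b _
    rw [Finset.mem_powerset]
    exact Finset.filter_subset _ _
  · intro p _
    exact Finset.mem_univ _
  · intro x _
    funext i
    by_cases h : x i = true <;>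
      simp [Finset.mem_filter, h]
  · intro p hp
    funext b hb
    ext i
    simp only [Finset.mem_filter, Finset.mem_univ, true_and, decide_eq_true_eq]
    constructor
    · rintro ⟨hcb, hmem⟩
      subst hcb
      exact hmem
    · intro hmem
      have hsub : p b hb ⊆ Finset.univ.filter (fun i : ι => c i = b) := by
        rw [← Finset.mem_powerset]
        exact Finset.mem_pi.1 hp b hb
      have hcb : c i = b := (Finset.mem_filter.1 (hsub hmem)).2
      subst hcb
      exact ⟨rfl, hmem⟩
  · intro x _
    rw [← Finset.prod_attach F (fun b => f b ((Finset.univ.filter (fun i => c i = b ∧ x i = true)).card))]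
    apply Finset.prod_congr rfl
    intro b _
    congr 1
    simp only [Finset.filter_filter]

lemma two_mul_card_le_pairs (k : ℕ) :
    2 * ((Finset.univ : Finset (Fin k × Fin k)).filter (fun ab => ab.1 ≤ ab.2)).card
      = k * k + k := by
  set s := (Finset.univ : Finset (Fin k × Fin k)).filter (fun ab => ab.1 ≤ ab.2) with hs
  set t := (Finset.univ : Finset (Fin k × Fin k)).filter (fun ab => ab.2 ≤ ab.1) with ht
  have hst : s.card = t.card := by
    refine Finset.card_bij' (fun ab _ => ab.swap) (fun ab _ => ab.swap) ?_ ?_ ?_ ?_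
    · intro ab hab
      simp only [hs, Finset.mem_filter] at hab
      simp [ht, hab.2]
    · intro ab hab
      simp only [ht, Finset.mem_filter] at hab
      simp [hs, hab.2]
    · intro ab _; rfl
    · intro ab _; rfl
  have hunion : s ∪ t = Finset.univ := by
    ext ab
    simp [hs, ht, le_total ab.1 ab.2]
  have hinter : s ∩ t = (Finset.univ : Finset (Fin k × Fin k)).filter (fun ab => ab.1 = ab.2) := by
    ext ab
    simp only [hs, ht, Finset.mem_inter, Finset.mem_filter, Finset.mem_univ, true_and]
    constructor
    · rintro ⟨h1, h2⟩; exact le_antisymm h1 h2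
    · rintro h; exact ⟨le_of_eq h, le_of_eq h.symm⟩
  have hdiag : ((Finset.univ : Finset (Fin k × Fin k)).filter (fun ab => ab.1 = ab.2)).card = k := by
    have hd2 : ((Finset.univ : Finset (Fin k × Fin k)).filter (fun ab => ab.1 = ab.2)).card
        = (Finset.univ : Finset (Fin k)).card := by
      refine Finset.card_bij' (fun ab _ => ab.1) (fun a _ => (a, a)) ?_ ?_ ?_ ?_
      · intro ab _; exact Finset.mem_univ _
      · intro a _; simp
      · intro ab hab
        simp only [Finset.mem_filter] at hab
        exact Prod.ext rfl hab.2
      · intro a _; rfl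
    rw [hd2, Finset.card_univ, Fintype.card_fin]
  have huniv : (Finset.univ : Finset (Fin k × Fin k)).card = k * k := by
    rw [Finset.card_univ, Fintype.card_prod, Fintype.card_fin]
  have := Finset.card_union_add_card_inter s t
  rw [hunion, hinter, huniv, hdiag] at this
  omega

/-- Number of potential edges between communities `ab.1` and `ab.2` under assignment `z`. -/
def nabSBM (n k : ℕ) (z : Fin n → Fin k) (ab : Fin k × Fin k) : ℕ :=
  (Finset.univ.filter (fun p : {p : Fin n × Fin n // p.1 < p.2} =>
    min (z p.1.1) (z p.1.2) = ab.1 ∧ max (z p.1.1) (z p.1.2) = ab.2)).card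

/-- Number of edges of the graph `x` between communities `ab.1` and `ab.2`. -/
def oabSBM (n k : ℕ) (z : Fin n → Fin k) (x : {p : Fin n × Fin n // p.1 < p.2} → Bool)
    (ab : Fin k × Fin k) : ℕ :=
  (Finset.univ.filter (fun p : {p : Fin n × Fin n // p.1 < p.2} =>
    (min (z p.1.1) (z p.1.2) = ab.1 ∧ max (z p.1.1) (z p.1.2) = ab.2) ∧ x p = true)).card

/-- Conditional Shtarkov sum `A(z,k) = ∑_x sup_P P(x|z)` of the SBM with `k` communities,
the sup being over symmetric `P ∈ [0,1]^{k×k}`. -/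
noncomputable def shtarkovA (n k : ℕ) (z : Fin n → Fin k) : ℝ :=
  ∑ x : {p : Fin n × Fin n // p.1 < p.2} → Bool,
    ⨆ P : {P : Fin k → Fin k → ℝ //
        (∀ a b, P a b ∈ Set.Icc (0 : ℝ) 1) ∧ (∀ a b, P a b = P b a)},
      ∏ ab ∈ Finset.univ.filter (fun ab : Fin k × Fin k => ab.1 ≤ ab.2),
        (P.1 ab.1 ab.2) ^ (oabSBM n k z x ab) *
          (1 - P.1 ab.1 ab.2) ^ (nabSBM n k z ab - oabSBM n k z x ab)


set_option maxHeartbeats 2000000 in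
theorem log_shtarkovA_bounds (k : ℕ) (hk : 1 ≤ k) :
    ∃ c : ℝ, ∀ n : ℕ, 2 ≤ n → ∀ z : Fin n → Fin k,
      0 ≤ Real.log (shtarkovA n k z) ∧
      Real.log (shtarkovA n k z) ≤ ((k : ℝ) * (k + 1) / 2) * Real.log n + c := by
  obtain ⟨a, ha, hst'⟩ := stirling_bounds
  set C₂ : ℝ := 2 + 4 * Real.exp 1 / a ^ 2 with hC₂
  have hC₂pos : (0:ℝ) < C₂ := by positivity
  have hC₂ge1 : (1:ℝ) ≤ C₂ := by
    have h : 0 ≤ 4 * Real.exp 1 / a ^ 2 := by positivity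
    rw [hC₂]
    linarith
  refine ⟨((k:ℝ) * (k + 1) / 2) * Real.log C₂, fun n hn z => ?_⟩
  set F := (Finset.univ.filter (fun ab : Fin k × Fin k => ab.1 ≤ ab.2)) with hF
  set cfun : {p : Fin n × Fin n // p.1 < p.2} → Fin k × Fin k :=
    fun p => (min (z p.1.1) (z p.1.2), max (z p.1.1) (z p.1.2)) with hcfun
  have hc : ∀ i : {p : Fin n × Fin n // p.1 < p.2}, cfun i ∈ F := by
    intro i
    rw [hF, Finset.mem_filter]
    exact ⟨Finset.mem_univ _, min_le_max⟩
  have hnab : ∀ ab : Fin k × Fin k, nabSBM n k z ab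
      = (Finset.univ.filter (fun i : {p : Fin n × Fin n // p.1 < p.2} => cfun i = ab)).card := by
    intro ab
    unfold nabSBM
    congr 1
    apply Finset.filter_congr
    intro i _
    simp [hcfun, Prod.ext_iff]
  have hoab : ∀ (x : {p : Fin n × Fin n // p.1 < p.2} → Bool) (ab : Fin k × Fin k), oabSBM n k z x ab
      = (Finset.univ.filter (fun i : {p : Fin n × Fin n // p.1 < p.2} => cfun i = ab ∧ x i = true)).card := by
    intro x ab
    unfold oabSBM
    congr 1
    apply Finset.filter_congr
    intro i _
    simp [hcfun, Prod.ext_iff]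
  have hole : ∀ (x : {p : Fin n × Fin n // p.1 < p.2} → Bool) (ab : Fin k × Fin k), oabSBM n k z x ab ≤ nabSBM n k z ab := by
    intro x ab
    rw [hnab, hoab]
    apply Finset.card_le_card
    intro i hi
    rw [Finset.mem_filter] at hi ⊢
    exact ⟨hi.1, hi.2.1⟩
  haveI : Nonempty {P : Fin k → Fin k → ℝ //
      (∀ a b, P a b ∈ Set.Icc (0 : ℝ) 1) ∧ (∀ a b, P a b = P b a)} :=
    ⟨⟨fun _ _ => 1/2, ⟨fun _ _ => ⟨by norm_num, by norm_num⟩, fun _ _ => rfl⟩⟩⟩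
  have hfac01 : ∀ (P : {P : Fin k → Fin k → ℝ //
      (∀ a b, P a b ∈ Set.Icc (0 : ℝ) 1) ∧ (∀ a b, P a b = P b a)}) (x : {p : Fin n × Fin n // p.1 < p.2} → Bool)
      (ab : Fin k × Fin k),
      0 ≤ (P.1 ab.1 ab.2) ^ (oabSBM n k z x ab) *
        (1 - P.1 ab.1 ab.2) ^ (nabSBM n k z ab - oabSBM n k z x ab) ∧
      (P.1 ab.1 ab.2) ^ (oabSBM n k z x ab) *
        (1 - P.1 ab.1 ab.2) ^ (nabSBM n k z ab - oabSBM n k z x ab) ≤ 1 := by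
    intro P x ab
    obtain ⟨h0, h1⟩ := P.2.1 ab.1 ab.2
    constructor
    · apply mul_nonneg (pow_nonneg h0 _) (pow_nonneg (by linarith) _)
    · calc (P.1 ab.1 ab.2) ^ (oabSBM n k z x ab) *
          (1 - P.1 ab.1 ab.2) ^ (nabSBM n k z ab - oabSBM n k z x ab)
          ≤ 1 * 1 := by
            apply mul_le_mul (pow_le_one₀ h0 h1) (pow_le_one₀ (by linarith) (by linarith))
              (pow_nonneg (by linarith) _) (by norm_num)
        _ = 1 := by norm_num
  have hbdd : ∀ x : {p : Fin n × Fin n // p.1 < p.2} → Bool, BddAbove (Set.range (fun P : {P : Fin k → Fin k → ℝ //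
      (∀ a b, P a b ∈ Set.Icc (0 : ℝ) 1) ∧ (∀ a b, P a b = P b a)} =>
      ∏ ab ∈ F, (P.1 ab.1 ab.2) ^ (oabSBM n k z x ab) *
        (1 - P.1 ab.1 ab.2) ^ (nabSBM n k z ab - oabSBM n k z x ab))) := by
    intro x
    refine ⟨1, ?_⟩
    rintro y ⟨P, rfl⟩
    exact Finset.prod_le_one (fun ab _ => (hfac01 P x ab).1) (fun ab _ => (hfac01 P x ab).2)
  -- Part 1 : 1 ≤ A
  have hA1 : (1:ℝ) ≤ shtarkovA n k z := by
    have hsum_nab : ∑ ab ∈ F, nabSBM n k z ab = Fintype.card {p : Fin n × Fin n // p.1 < p.2} := by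
      rw [← Finset.card_univ]
      rw [Finset.card_eq_sum_card_fiberwise (fun i _ => hc i)]
      apply Finset.sum_congr rfl
      intro ab _
      rw [hnab]
    have hval : ∀ x : {p : Fin n × Fin n // p.1 < p.2} → Bool,
        (fun P : {P : Fin k → Fin k → ℝ //
          (∀ a b, P a b ∈ Set.Icc (0 : ℝ) 1) ∧ (∀ a b, P a b = P b a)} =>
          ∏ ab ∈ F, (P.1 ab.1 ab.2) ^ (oabSBM n k z x ab) *
            (1 - P.1 ab.1 ab.2) ^ (nabSBM n k z ab - oabSBM n k z x ab))
          ⟨fun _ _ => 1/2, ⟨fun _ _ => ⟨by norm_num, by norm_num⟩, fun _ _ => rfl⟩⟩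
          = (1/2 : ℝ) ^ (Fintype.card {p : Fin n × Fin n // p.1 < p.2}) := by
      intro x
      simp only
      have : ∀ ab ∈ F, ((1:ℝ)/2) ^ (oabSBM n k z x ab) *
          (1 - (1:ℝ)/2) ^ (nabSBM n k z ab - oabSBM n k z x ab)
          = ((1:ℝ)/2) ^ (nabSBM n k z ab) := by
        intro ab _
        rw [show (1 : ℝ) - 1/2 = 1/2 by norm_num, ← pow_add]
        congr 1
        have := hole x ab
        omega
      rw [Finset.prod_congr rfl this, Finset.prod_pow_eq_pow_sum, hsum_nab]
    have hle : ∀ x : {p : Fin n × Fin n // p.1 < p.2} → Bool, (1/2 : ℝ) ^ (Fintype.card {p : Fin n × Fin n // p.1 < p.2}) ≤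
        ⨆ P : {P : Fin k → Fin k → ℝ //
          (∀ a b, P a b ∈ Set.Icc (0 : ℝ) 1) ∧ (∀ a b, P a b = P b a)},
          ∏ ab ∈ F, (P.1 ab.1 ab.2) ^ (oabSBM n k z x ab) *
            (1 - P.1 ab.1 ab.2) ^ (nabSBM n k z ab - oabSBM n k z x ab) := by
      intro x
      rw [← hval x]
      exact le_ciSup (hbdd x) _
    calc (1:ℝ) = (Fintype.card ({p : Fin n × Fin n // p.1 < p.2} → Bool)) * (1/2 : ℝ) ^ (Fintype.card {p : Fin n × Fin n // p.1 < p.2}) := by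
          rw [Fintype.card_fun, Fintype.card_bool]
          rw [show ((2:ℕ) ^ Fintype.card {p : Fin n × Fin n // p.1 < p.2} : ℕ) = 2 ^ Fintype.card {p : Fin n × Fin n // p.1 < p.2} from rfl]
          push_cast
          rw [← mul_pow]
          norm_num
      _ = ∑ _x : {p : Fin n × Fin n // p.1 < p.2} → Bool, (1/2 : ℝ) ^ (Fintype.card {p : Fin n × Fin n // p.1 < p.2}) := by
          rw [Finset.sum_const, Finset.card_univ, nsmul_eq_mul]
      _ ≤ shtarkovA n k z := by
          unfold shtarkovA
          exact Finset.sum_le_sum (fun x _ => hle x)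
  have hApos : 0 < shtarkovA n k z := lt_of_lt_of_le one_pos hA1
  refine ⟨Real.log_nonneg hA1, ?_⟩
  -- Part 2 : upper bound
  have hnpos : (0:ℝ) < n := by
    have : 0 < n := by omega
    exact_mod_cast this
  have hnab_le : ∀ ab : Fin k × Fin k, (nabSBM n k z ab : ℝ) ≤ (n:ℝ)^2 := by
    intro ab
    have h1 : nabSBM n k z ab ≤ Fintype.card {p : Fin n × Fin n // p.1 < p.2} := by
      rw [hnab, ← Finset.card_univ]
      exact Finset.card_le_card (Finset.filter_subset _ _)
    have h2 : Fintype.card {p : Fin n × Fin n // p.1 < p.2} ≤ n * n := by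
      calc Fintype.card {p : Fin n × Fin n // p.1 < p.2} ≤ Fintype.card (Fin n × Fin n) := Fintype.card_subtype_le _
        _ = n * n := by rw [Fintype.card_prod, Fintype.card_fin]
    have : nabSBM n k z ab ≤ n * n := le_trans h1 h2
    have : (nabSBM n k z ab : ℝ) ≤ (n : ℝ) * n := by exact_mod_cast this
    nlinarith
  have hsup_le : ∀ x : {p : Fin n × Fin n // p.1 < p.2} → Bool,
      (⨆ P : {P : Fin k → Fin k → ℝ //
        (∀ a b, P a b ∈ Set.Icc (0 : ℝ) 1) ∧ (∀ a b, P a b = P b a)},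
        ∏ ab ∈ F, (P.1 ab.1 ab.2) ^ (oabSBM n k z x ab) *
          (1 - P.1 ab.1 ab.2) ^ (nabSBM n k z ab - oabSBM n k z x ab))
        ≤ ∏ ab ∈ F, SBMg (nabSBM n k z ab) (oabSBM n k z x ab) := by
    intro x
    apply ciSup_le
    intro P
    apply Finset.prod_le_prod (fun ab _ => (hfac01 P x ab).1)
    intro ab _
    exact pow_mul_pow_le_SBMg _ _ (hole x ab) (P.2.1 ab.1 ab.2).1 (P.2.1 ab.1 ab.2).2
  have hstep1 : shtarkovA n k z ≤
      ∑ x : {p : Fin n × Fin n // p.1 < p.2} → Bool, ∏ ab ∈ F, SBMg (nabSBM n k z ab) (oabSBM n k z x ab) := by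
    unfold shtarkovA
    exact Finset.sum_le_sum (fun x _ => hsup_le x)
  have hstep2 : ∑ x : {p : Fin n × Fin n // p.1 < p.2} → Bool, ∏ ab ∈ F, SBMg (nabSBM n k z ab) (oabSBM n k z x ab)
      = ∏ ab ∈ F, ∑ o ∈ Finset.range ((nabSBM n k z ab) + 1),
          ((nabSBM n k z ab).choose o : ℝ) * SBMg (nabSBM n k z ab) o := by
    have hrw : ∀ x : {p : Fin n × Fin n // p.1 < p.2} → Bool, ∏ ab ∈ F, SBMg (nabSBM n k z ab) (oabSBM n k z x ab)
        = ∏ ab ∈ F, (fun ab o => SBMg ((Finset.univ.filter (fun i : {p : Fin n × Fin n // p.1 < p.2} => cfun i = ab)).card) o)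
            ab ((Finset.univ.filter (fun i : {p : Fin n × Fin n // p.1 < p.2} => cfun i = ab ∧ x i = true)).card) := by
      intro x
      apply Finset.prod_congr rfl
      intro ab _
      rw [hnab, hoab]
    calc ∑ x : {p : Fin n × Fin n // p.1 < p.2} → Bool, ∏ ab ∈ F, SBMg (nabSBM n k z ab) (oabSBM n k z x ab)
        = ∑ x : {p : Fin n × Fin n // p.1 < p.2} → Bool, ∏ ab ∈ F,
            (fun ab o => SBMg ((Finset.univ.filter (fun i : {p : Fin n × Fin n // p.1 < p.2} => cfun i = ab)).card) o)
            ab ((Finset.univ.filter (fun i : {p : Fin n × Fin n // p.1 < p.2} => cfun i = ab ∧ x i = true)).card) := by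
          exact Finset.sum_congr rfl (fun x _ => hrw x)
      _ = ∏ ab ∈ F, ∑ s ∈ (Finset.univ.filter (fun i : {p : Fin n × Fin n // p.1 < p.2} => cfun i = ab)).powerset,
            (fun ab o => SBMg ((Finset.univ.filter (fun i : {p : Fin n × Fin n // p.1 < p.2} => cfun i = ab)).card) o) ab s.card :=
          sum_prod_fiber F cfun hc _
      _ = ∏ ab ∈ F, ∑ o ∈ Finset.range ((nabSBM n k z ab) + 1),
            ((nabSBM n k z ab).choose o : ℝ) * SBMg (nabSBM n k z ab) o := by
          apply Finset.prod_congr rfl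
          intro ab _
          rw [sum_powerset_card, hnab]
  have hstep3 : ∏ ab ∈ F, ∑ o ∈ Finset.range ((nabSBM n k z ab) + 1),
      ((nabSBM n k z ab).choose o : ℝ) * SBMg (nabSBM n k z ab) o ≤ (C₂ * n) ^ F.card := by
    rw [← Finset.prod_const (C₂ * (n:ℝ))]
    apply Finset.prod_le_prod
    · intro ab _
      apply Finset.sum_nonneg
      intro o _
      exact mul_nonneg (by positivity) (SBMg_nonneg _ _)
    · intro ab _
      calc ∑ o ∈ Finset.range ((nabSBM n k z ab) + 1),
            ((nabSBM n k z ab).choose o : ℝ) * SBMg (nabSBM n k z ab) o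
          ≤ 2 + (4 * Real.exp 1 / a ^ 2) * Real.sqrt (nabSBM n k z ab) :=
            binom_shtarkov_le a ha hst' _
        _ ≤ 2 + (4 * Real.exp 1 / a ^ 2) * n := by
            have hs : Real.sqrt (nabSBM n k z ab) ≤ n := by
              calc Real.sqrt (nabSBM n k z ab) ≤ Real.sqrt ((n:ℝ)^2) :=
                    Real.sqrt_le_sqrt (hnab_le ab)
                _ = n := Real.sqrt_sq hnpos.le
            have h4 : (0:ℝ) ≤ 4 * Real.exp 1 / a ^ 2 := by positivity
            nlinarith
        _ ≤ C₂ * n := by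
            rw [hC₂]
            have hn1 : (1:ℝ) ≤ n := by
              have : 1 ≤ n := by omega
              exact_mod_cast this
            nlinarith [Real.exp_pos 1, sq_nonneg a, ha]
  have hcard : 2 * F.card = k * k + k := two_mul_card_le_pairs k
  have hcardR : (F.card : ℝ) = (k:ℝ) * (k + 1) / 2 := by
    have : (2 * F.card : ℝ) = (k:ℝ) * k + k := by exact_mod_cast hcard
    push_cast at this ⊢
    linarith
  calc Real.log (shtarkovA n k z)
      ≤ Real.log ((C₂ * n) ^ F.card) := by
        apply Real.log_le_log hApos
        exact le_trans hstep1 (le_of_eq hstep2 |>.trans hstep3)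
    _ = (F.card : ℝ) * Real.log (C₂ * n) := Real.log_pow _ _
    _ = (F.card : ℝ) * (Real.log C₂ + Real.log n) := by
        rw [Real.log_mul hC₂pos.ne' hnpos.ne']
    _ = ((k : ℝ) * (k + 1) / 2) * Real.log n + ((k:ℝ) * (k + 1) / 2) * Real.log C₂ := by
        rw [hcardR]; ring
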